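/- Let U be a full-rank subgroup of O_K^× containing the roots of unity μ_K, let ℓ be a prime, and suppose that whenever u ∈ U is an ℓ-th power in K^× then u ∈ U^ℓ·μ_K. Then ℓ does not divide the index [O_K^× : U]. -/

import Mathlib

open NumberField NumberField.Units

/-- Let `U` be a full-rank, finite-index subgroup of `𝓞_K^×` containing the roots of unity
`μ_K`, and let `ℓ` be a prime.  Suppose that whenever `u ∈ U` is an `ℓ`-th power in `K^×`
then `u ∈ U^ℓ·μ_K`.  Then `ℓ` does not divide the index `[𝓞_K^× : U]`. -/
theorem prime_not_dvd_index_of_saturated (K : Type*) [Field K] [NumberField K]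
    (U : Subgroup (𝓞 K)ˣ) (hμ : torsion K ≤ U) (hfin : U.FiniteIndex)
    (ℓ : ℕ) (hℓ : ℓ.Prime)
    (hsat : ∀ u ∈ U, (∃ b : K, b ^ ℓ = algebraMap (𝓞 K) K u) →
      ∃ z ∈ U, ∃ t ∈ torsion K, z ^ ℓ * t = u) :
    ¬ ℓ ∣ U.index := by
  intro hdvd
  haveI : Finite ((𝓞 K)ˣ ⧸ U) := Subgroup.finite_quotient_of_finiteIndex
  haveI : Fact ℓ.Prime := ⟨hℓ⟩
  have hcard : ℓ ∣ Nat.card ((𝓞 K)ˣ ⧸ U) := hdvd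
  obtain ⟨g, hg⟩ := exists_prime_orderOf_dvd_card' (G := (𝓞 K)ˣ ⧸ U) ℓ hcard
  obtain ⟨x, rfl⟩ := QuotientGroup.mk_surjective g
  have hxU : x ∉ U := by
    intro hx
    have : (QuotientGroup.mk x : (𝓞 K)ˣ ⧸ U) = 1 := (QuotientGroup.eq_one_iff x).mpr hx
    rw [this, orderOf_one] at hg
    exact hℓ.one_lt.ne' hg.symm
  have hxl : x ^ ℓ ∈ U := by
    have : (QuotientGroup.mk x : (𝓞 K)ˣ ⧸ U) ^ ℓ = 1 := by
      rw [← hg]; exact pow_orderOf_eq_one _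
    rwa [← QuotientGroup.mk_pow, QuotientGroup.eq_one_iff] at this
  obtain ⟨z, hz, t, ht, hzt⟩ := hsat (x ^ ℓ) hxl
    ⟨algebraMap (𝓞 K) K (x : 𝓞 K), by push_cast; ring⟩
  have key : (x * z⁻¹) ^ ℓ = t := by
    rw [mul_pow, inv_pow, ← hzt, mul_comm (z ^ ℓ) t, mul_assoc, mul_inv_cancel, mul_one]
  have htf : IsOfFinOrder t := ht
  obtain ⟨n, hn, hpow⟩ := isOfFinOrder_iff_pow_eq_one.mp htf
  have hfx : IsOfFinOrder (x * z⁻¹) := by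
    refine isOfFinOrder_iff_pow_eq_one.mpr ⟨ℓ * n, Nat.mul_pos hℓ.pos hn, ?_⟩
    rw [pow_mul, key, hpow]
  have : x * z⁻¹ ∈ U := hμ hfx
  exact hxU (by simpa using U.mul_mem this hz)
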